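/- Let A be a real n×d matrix, α(x) := ⟨exp(Ax), 1_n⟩, and f(x) := α(x)^{-1} · exp(Ax). Then for each i, j ∈ [d], the second partial derivative of α(x)^{-1} satisfies ∂²(α(x)^{-1})/∂x_i ∂x_j = 2 α(x)^{-1} ⟨f(x), A_{*,i}⟩ ⟨f(x), A_{*,j}⟩ − α(x)^{-1} ⟨f(x), A_{*,i} ∘ A_{*,j}⟩. -/

import Mathlib

open Matrix

/-- The Euclidean inner product on ℝ^n. -/
noncomputable def dotp {n : ℕ} (u v : Fin n → ℝ) : ℝ := ∑ i, u i * v i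

/-- The normalization factor α(x) = ⟨exp(Ax), 1_n⟩. -/
noncomputable def alphaFn {n d : ℕ} (A : Matrix (Fin n) (Fin d) ℝ) (x : Fin d → ℝ) : ℝ :=
  ∑ i, Real.exp (A.mulVec x i)

/-- The softmax function f(x) = α(x)⁻¹ · exp(Ax). -/
noncomputable def softmaxFn {n d : ℕ} (A : Matrix (Fin n) (Fin d) ℝ) (x : Fin d → ℝ) :
    Fin n → ℝ :=
  (alphaFn A x)⁻¹ • fun i => Real.exp (A.mulVec x i)

section aux

variable {n d : ℕ} (A : Matrix (Fin n) (Fin d) ℝ)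

/-- The k-th row of A as a continuous linear map. -/
noncomputable def rowC (k : Fin n) : (Fin d → ℝ) →L[ℝ] ℝ :=
  LinearMap.toContinuousLinearMap ((LinearMap.proj k).comp A.mulVecLin)

lemma rowC_apply (k : Fin n) (v : Fin d → ℝ) : rowC A k v = A.mulVec v k := rfl

lemma rowC_single (k : Fin n) (j : Fin d) : rowC A k (Pi.single j 1) = A k j := by
  rw [rowC_apply]
  simp [Matrix.mulVec, dotProduct, Pi.single_apply, mul_comm]

noncomputable def betaF (j : Fin d) (z : Fin d → ℝ) : ℝ :=
  ∑ k, Real.exp (A.mulVec z k) * A k j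

lemma hasFDerivAt_alpha (x : Fin d → ℝ) :
    HasFDerivAt (alphaFn A) (∑ k, Real.exp (A.mulVec x k) • rowC A k) x := by
  have h : ∀ k : Fin n, HasFDerivAt (fun z => Real.exp (rowC A k z))
      (Real.exp (A.mulVec x k) • rowC A k) x := fun k =>
    (Real.hasDerivAt_exp (rowC A k x)).comp_hasFDerivAt x (rowC A k).hasFDerivAt
  have := HasFDerivAt.fun_sum (fun k (_ : k ∈ Finset.univ) => h k)
  exact this

lemma hasFDerivAt_beta (j : Fin d) (x : Fin d → ℝ) :
    HasFDerivAt (betaF A j)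
      (∑ k, (Real.exp (A.mulVec x k) * A k j) • rowC A k) x := by
  have h : ∀ k : Fin n, HasFDerivAt (fun z => Real.exp (rowC A k z) * A k j)
      ((Real.exp (A.mulVec x k) * A k j) • rowC A k) x := by
    intro k
    have := ((Real.hasDerivAt_exp (rowC A k x)).comp_hasFDerivAt x
      (rowC A k).hasFDerivAt).mul_const (A k j)
    refine this.congr_fderiv ?_
    rw [smul_smul, mul_comm]
    rfl
  have := HasFDerivAt.fun_sum (fun k (_ : k ∈ Finset.univ) => h k)
  exact this

lemma alpha_pos [NeZero n] (x : Fin d → ℝ) : 0 < alphaFn A x :=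
  Finset.sum_pos (fun k _ => Real.exp_pos _) Finset.univ_nonempty

lemma inner_fderiv [NeZero n] (j : Fin d) (y : Fin d → ℝ) :
    fderiv ℝ (fun z => (alphaFn A z)⁻¹) y (Pi.single j 1)
      = -(((alphaFn A y) ^ 2)⁻¹ * betaF A j y) := by
  have hα := hasFDerivAt_alpha A y
  have hne : alphaFn A y ≠ 0 := (alpha_pos A y).ne'
  have h : HasFDerivAt (fun z => (alphaFn A z)⁻¹)
      ((-(alphaFn A y ^ 2)⁻¹) • ∑ k, Real.exp (A.mulVec y k) • rowC A k) y :=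
    (hasDerivAt_inv hne).comp_hasFDerivAt y hα
  rw [h.fderiv]
  simp only [ContinuousLinearMap.smul_apply, ContinuousLinearMap.coe_sum',
    Finset.sum_apply, ContinuousLinearMap.coe_smul', Pi.smul_apply, rowC_single,
    smul_eq_mul, betaF]
  simp [Finset.mul_sum]

end aux

theorem stmt_4 {n d : ℕ} (A : Matrix (Fin n) (Fin d) ℝ) (x : Fin d → ℝ) (i j : Fin d) :
    fderiv ℝ (fun y => fderiv ℝ (fun z => (alphaFn A z)⁻¹) y (Pi.single j 1)) x
        (Pi.single i 1) =
      2 * (alphaFn A x)⁻¹ * dotp (softmaxFn A x) (fun k => A k i)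
          * dotp (softmaxFn A x) (fun k => A k j)
        - (alphaFn A x)⁻¹
          * dotp (softmaxFn A x) ((fun k => A k i) * fun k => A k j) := by
  rcases Nat.eq_zero_or_pos n with hn | hn
  · subst hn
    have h0 : (fun y : Fin d → ℝ =>
        fderiv ℝ (fun z => (alphaFn A z)⁻¹) y (Pi.single j 1)) = fun _ => 0 := by
      funext y
      have : (fun z : Fin d → ℝ => (alphaFn A z)⁻¹) = fun _ => (0:ℝ)⁻¹ := by
        funext z; simp [alphaFn]
      rw [this, fderiv_fun_const]
      simp
    rw [h0, fderiv_fun_const]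
    simp [dotp]
  · haveI : NeZero n := ⟨hn.ne'⟩
    have hfun : (fun y : Fin d → ℝ =>
        fderiv ℝ (fun z => (alphaFn A z)⁻¹) y (Pi.single j 1))
        = fun y => -(((alphaFn A y) ^ 2)⁻¹ * betaF A j y) := by
      funext y; exact inner_fderiv A j y
    rw [hfun]
    set α := alphaFn A x with hαdef
    have hne : α ≠ 0 := (alpha_pos A x).ne'
    have hα := hasFDerivAt_alpha A x
    have hβj := hasFDerivAt_beta A j x
    set Dα := ∑ k, Real.exp (A.mulVec x k) • rowC A k with hDα
    set Dβ := ∑ k, (Real.exp (A.mulVec x k) * A k j) • rowC A k with hDβ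
    have hsq : HasFDerivAt (fun y => (alphaFn A y) ^ 2) (α • Dα + α • Dα) x := by
      have := hα.fun_mul hα
      simp only [← pow_two] at this
      exact this
    have hne2 : α ^ 2 ≠ 0 := pow_ne_zero _ hne
    have hinv : HasFDerivAt (fun y => ((alphaFn A y) ^ 2)⁻¹)
        ((-((α ^ 2) ^ 2)⁻¹) • (α • Dα + α • Dα)) x :=
      (hasDerivAt_inv hne2).comp_hasFDerivAt x hsq
    have hmul := hinv.fun_mul hβj
    have hfull := (hmul.fun_neg :)
    rw [hfull.fderiv]
    simp only [ContinuousLinearMap.neg_apply, ContinuousLinearMap.add_apply,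
      ContinuousLinearMap.smul_apply, hDα, hDβ, ContinuousLinearMap.coe_sum',
      Finset.sum_apply, ContinuousLinearMap.coe_smul', Pi.smul_apply,
      rowC_single, smul_eq_mul]
    set βi := ∑ k, Real.exp (A.mulVec x k) * A k i with hβi
    set βj' := ∑ k, Real.exp (A.mulVec x k) * A k j with hβj'
    set γ := ∑ k, Real.exp (A.mulVec x k) * A k i * A k j with hγ
    have e2 : dotp (softmaxFn A x) (fun k => A k i) = α⁻¹ * βi := by
      simp [dotp, softmaxFn, Finset.mul_sum, hβi, mul_assoc, ← hαdef]
    have e3 : dotp (softmaxFn A x) (fun k => A k j) = α⁻¹ * βj' := by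
      simp [dotp, softmaxFn, Finset.mul_sum, hβj', mul_assoc, ← hαdef]
    have e4 : dotp (softmaxFn A x) ((fun k => A k i) * fun k => A k j) = α⁻¹ * γ := by
      simp [dotp, softmaxFn, Finset.mul_sum, hγ, mul_assoc, ← hαdef]
    rw [e2, e3, e4]
    have hβjx : betaF A j x = βj' := rfl
    have hsum1 : ∀ c : ℝ, ∑ k, c * (Real.exp (A.mulVec x k) * A k i) = c * βi := by
      intro c; rw [hβi, Finset.mul_sum]
    have hsum2 : ∑ k, Real.exp (A.mulVec x k) * A k j * A k i = γ := by
      rw [hγ]; congr 1; funext k; ring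
    rw [hsum2, hβjx, ← hαdef]
    field_simp
    ring
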